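/- arXiv:2302.11128 — 11 statements merged into one kernel-verified Lean document; each statement's English description precedes it below -/
import Mathlib

section
/- (Proposition 1, equilibrium characterization) Suppose w ∈ (0,1) and a, b ∈ (0,1) satisfy the ex-post optimal investment conditions p1(a)(1−w) = k and p0(b)(1−w) = k together with the rent-continuity (incentive compatibility) conditions a(1−q1)(w−c) − (1−a)q0·c = 0 and b(1−q1)(w−c) − (1−b)q0·c = b·w − c. Then w = c/(k+c), a = q0(k+c)/((1−q1)(1−k−c)+q0(k+c)), and b = (1−q0)(k+c)/(q1+(1−q1−q0)(k+c)). -/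
/-- Proposition 1 (equilibrium characterization): if `w ∈ (0,1)` and `a, b ∈ (0,1)` satisfy
the ex-post optimal investment conditions `p1(a)(1−w) = k` and `p0(b)(1−w) = k` together with
the rent-continuity (incentive compatibility) conditions, then `w = c/(k+c)` and the cutoffs
`a`, `b` take the closed forms given in the paper. -/
theorem stmt_1 (k c q1 q0 w a b : ℝ)
    (hk : 0 < k) (hc : 0 < c) (hkc : k + c < 1)
    (hq1 : q1 ∈ Set.Ioo (0 : ℝ) (1/2)) (hq0 : q0 ∈ Set.Ioo (0 : ℝ) (1/2))
    (hw : w ∈ Set.Ioo (0 : ℝ) 1)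
    (ha : a ∈ Set.Ioo (0 : ℝ) 1) (hb : b ∈ Set.Ioo (0 : ℝ) 1)
    (hinv1 : a * (1 - q1) / (a * (1 - q1) + (1 - a) * q0) * (1 - w) = k)
    (hinv0 : b * q1 / (b * q1 + (1 - b) * (1 - q0)) * (1 - w) = k)
    (hic1 : a * (1 - q1) * (w - c) - (1 - a) * q0 * c = 0)
    (hic0 : b * (1 - q1) * (w - c) - (1 - b) * q0 * c = b * w - c) :
    w = c / (k + c) ∧
    a = q0 * (k + c) / ((1 - q1) * (1 - k - c) + q0 * (k + c)) ∧
    b = (1 - q0) * (k + c) / (q1 + (1 - q1 - q0) * (k + c)) := by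
  obtain ⟨ha0, ha1⟩ := ha
  obtain ⟨hb0, hb1⟩ := hb
  obtain ⟨hw0, hw1⟩ := hw
  obtain ⟨hq10, hq11⟩ := hq1
  obtain ⟨hq00, hq01⟩ := hq0
  have h1q1 : 0 < 1 - q1 := by linarith
  have h1q0 : 0 < 1 - q0 := by linarith
  have hkc0 : 0 < k + c := by linarith
  have h1kc : 0 < 1 - k - c := by linarith
  have hD1 : 0 < a * (1 - q1) + (1 - a) * q0 := by
    have := mul_pos ha0 h1q1
    have := mul_pos (by linarith : (0:ℝ) < 1 - a) hq00
    linarith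
  have hD0 : 0 < b * q1 + (1 - b) * (1 - q0) := by
    have := mul_pos hb0 hq10
    have := mul_pos (by linarith : (0:ℝ) < 1 - b) h1q0
    linarith
  rw [div_mul_eq_mul_div, div_eq_iff hD1.ne'] at hinv1
  rw [div_mul_eq_mul_div, div_eq_iff hD0.ne'] at hinv0
  have haq : 0 < a * (1 - q1) := mul_pos ha0 h1q1
  -- derive w
  have key : a * (1 - q1) * ((1 - w) * c - k * w) = 0 := by
    linear_combination c * hinv1 - k * hic1
  have hwc : (1 - w) * c = k * w := by
    rcases mul_eq_zero.mp key with h | h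
    · exact absurd h haq.ne'
    · linarith
  have hw2 : w * (k + c) = c := by nlinarith [hwc]
  have hw_eq : w = c / (k + c) := by
    rw [eq_div_iff hkc0.ne']; linarith
  refine ⟨hw_eq, ?_, ?_⟩
  · -- a
    have hDa : 0 < (1 - q1) * (1 - k - c) + q0 * (k + c) := by positivity
    rw [eq_div_iff hDa.ne']
    have h : c * (a * ((1 - q1) * (1 - k - c) + q0 * (k + c))) = c * (q0 * (k + c)) := by
      linear_combination (k + c) * hic1 - a * (1 - q1) * hw2
    exact mul_left_cancel₀ hc.ne' h
  · -- b
    have hDb : 0 < q1 + (1 - q1 - q0) * (k + c) := by nlinarith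
    rw [eq_div_iff hDb.ne']
    have h5 : k * (b * q1) = k * ((b * q1 + (1 - b) * (1 - q0)) * (k + c)) := by
      linear_combination (k + c) * hinv0 + b * q1 * hw2
    have h6 := mul_left_cancel₀ hk.ne' h5
    linear_combination h6
end

section
/- For all q1, q0 ∈ (0, 1/2), the investment cutoffs satisfy 0 < θ1(q1,q0) < θ0(q1,q0) < 1; that is, the no-investment, conditional investment, and unconditional investment zones are all nonempty. -/
/-- For all `q1, q0 ∈ (0, 1/2)`, the investment cutoffs satisfy `0 < θ1 < θ0 < 1`:
the no-investment, conditional investment, and unconditional investment zones are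
all nonempty. -/
theorem stmt_2 (k c : ℝ) (hk : 0 < k) (hc : 0 < c) (hkc : k + c < 1) :
    ∀ q1 ∈ Set.Ioo (0 : ℝ) (1/2), ∀ q0 ∈ Set.Ioo (0 : ℝ) (1/2),
      0 < q0 * (k + c) / ((1 - q1) * (1 - k - c) + q0 * (k + c)) ∧
      q0 * (k + c) / ((1 - q1) * (1 - k - c) + q0 * (k + c)) <
        (1 - q0) * (k + c) / (q1 + (1 - q1 - q0) * (k + c)) ∧
      (1 - q0) * (k + c) / (q1 + (1 - q1 - q0) * (k + c)) < 1 := by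
  rintro q1 ⟨hq1, hq1'⟩ q0 ⟨hq0, hq0'⟩
  have hm : 0 < k + c := by linarith
  have hD1 : 0 < (1 - q1) * (1 - k - c) + q0 * (k + c) := by nlinarith
  have hD0 : 0 < q1 + (1 - q1 - q0) * (k + c) := by nlinarith
  refine ⟨div_pos (by positivity) hD1, ?_, ?_⟩
  · rw [div_lt_div_iff₀ hD1 hD0]
    nlinarith [mul_pos (mul_pos hm (show (0:ℝ) < 1 - k - c by linarith))
      (show (0:ℝ) < 1 - q0 - q1 by linarith)]
  · rw [div_lt_one hD0]
    nlinarith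
end

section
/- (Proposition 2, screening effect) The minimal type in the managerial pool θ1(q1,q0) is strictly increasing in the noisiness of the signal: for all q1, q0 ∈ (0, 1/2], the partial derivative of θ1 with respect to q1 is strictly positive and the partial derivative of θ1 with respect to q0 is strictly positive. -/
/-- Proposition 2 (screening effect): the minimal type in the managerial pool
`θ1(q1,q0) = q0(k+c)/((1−q1)(1−k−c)+q0(k+c))` is strictly increasing in the noisiness of
the signal: for all `q1, q0 ∈ (0, 1/2]`, both partial derivatives are strictly positive. -/
theorem stmt_4 (k c : ℝ) (hk : 0 < k) (hc : 0 < c) (hkc : k + c < 1) :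
    ∀ q1 ∈ Set.Ioc (0 : ℝ) (1/2), ∀ q0 ∈ Set.Ioc (0 : ℝ) (1/2),
      0 < deriv (fun x : ℝ => q0 * (k + c) / ((1 - x) * (1 - k - c) + q0 * (k + c))) q1 ∧
      0 < deriv (fun x : ℝ => x * (k + c) / ((1 - q1) * (1 - k - c) + x * (k + c))) q0 := by
  intro q1 hq1 q0 hq0
  obtain ⟨hq1p, hq1h⟩ := hq1
  obtain ⟨hq0p, hq0h⟩ := hq0
  have hB : 0 < 1 - k - c := by linarith
  have hkc' : 0 < k + c := by linarith
  have hA : 0 < q0 * (k + c) := mul_pos hq0p hkc'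
  have hden1 : 0 < (1 - q1) * (1 - k - c) + q0 * (k + c) := by
    have : 0 < (1 - q1) * (1 - k - c) := mul_pos (by linarith) hB
    linarith
  constructor
  · have hnum : HasDerivAt (fun _ : ℝ => q0 * (k + c)) 0 q1 := hasDerivAt_const _ _
    have hd0 : HasDerivAt (fun x : ℝ => (1 - x) * (1 - k - c) + q0 * (k + c))
        (-(1 - k - c)) q1 := by
      have h1 : HasDerivAt (fun x : ℝ => 1 - x) (-1) q1 := by
        simpa using (hasDerivAt_id q1).const_sub 1
      have := (h1.mul_const (1 - k - c)).add_const (q0 * (k + c))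
      simpa using this
    have hdiv : HasDerivAt (fun x : ℝ => q0 * (k + c) / ((1 - x) * (1 - k - c) + q0 * (k + c))) _ q1 :=
      hnum.div hd0 (ne_of_gt hden1)
    rw [hdiv.deriv]
    have : (0 * ((1 - q1) * (1 - k - c) + q0 * (k + c)) -
        q0 * (k + c) * -(1 - k - c)) / ((1 - q1) * (1 - k - c) + q0 * (k + c)) ^ 2
        = q0 * (k + c) * (1 - k - c) / ((1 - q1) * (1 - k - c) + q0 * (k + c)) ^ 2 := by
      ring
    rw [this]
    positivity
  · have hnum : HasDerivAt (fun x : ℝ => x * (k + c)) (k + c) q0 := by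
      simpa using (hasDerivAt_id q0).mul_const (k + c)
    have hd0 : HasDerivAt (fun x : ℝ => (1 - q1) * (1 - k - c) + x * (k + c)) (k + c) q0 := by
      have := ((hasDerivAt_id q0).mul_const (k + c)).const_add ((1 - q1) * (1 - k - c))
      simpa using this
    have hdiv : HasDerivAt (fun x : ℝ => x * (k + c) / ((1 - q1) * (1 - k - c) + x * (k + c))) _ q0 :=
      hnum.div hd0 (ne_of_gt hden1)
    rw [hdiv.deriv]
    have : ((k + c) * ((1 - q1) * (1 - k - c) + q0 * (k + c)) -
        q0 * (k + c) * (k + c)) / ((1 - q1) * (1 - k - c) + q0 * (k + c)) ^ 2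
        = (k + c) * ((1 - q1) * (1 - k - c)) / ((1 - q1) * (1 - k - c) + q0 * (k + c)) ^ 2 := by
      ring
    rw [this]
    have h1q1 : 0 < 1 - q1 := by linarith
    positivity
end

section
/- (Proposition 3, part 1) In the conservatism parameterization, the minimal type in the managerial pool is strictly increasing in the noisiness of the signal: for all real q, λ with 0 ≤ λ < q < 1/2, the partial derivative of θ1(q,λ) = (q−λ)(k+c)/((1−q−λ)(1−k−c)+(q−λ)(k+c)) with respect to q is strictly positive. -/
/-- Proposition 3, part 1: in the conservatism parameterization, the minimal type in the
managerial pool `θ1(q,λ) = (q−λ)(k+c)/((1−q−λ)(1−k−c)+(q−λ)(k+c))` is strictly increasing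
in the noisiness `q` of the signal, for all `0 ≤ λ < q < 1/2`. -/
theorem stmt_5 (k c : ℝ) (hk : 0 < k) (hc : 0 < c) (hkc : k + c < 1) :
    ∀ q lam : ℝ, 0 ≤ lam → lam < q → q < 1/2 →
      0 < deriv (fun x : ℝ =>
        (x - lam) * (k + c) / ((1 - x - lam) * (1 - k - c) + (x - lam) * (k + c))) q := by
  intro q lam hlam hlq hq
  have hD : 0 < (1 - q - lam) * (1 - k - c) + (q - lam) * (k + c) := by nlinarith
  have hN : HasDerivAt (fun x : ℝ => (x - lam) * (k + c)) (k + c) q := by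
    simpa using ((hasDerivAt_id q).sub_const lam).mul_const (k + c)
  have hDen : HasDerivAt (fun x : ℝ => (1 - x - lam) * (1 - k - c) + (x - lam) * (k + c))
      ((-1) * (1 - k - c) + 1 * (k + c)) q := by
    have h1 : HasDerivAt (fun x : ℝ => (1 - x - lam) * (1 - k - c)) ((-1) * (1 - k - c)) q := by
      have : HasDerivAt (fun x : ℝ => 1 - x - lam) (-1) q := by
        simpa using (((hasDerivAt_id q).const_sub 1).sub_const lam)
      simpa using this.mul_const (1 - k - c)
    exact h1.add (by simpa using hN)
  have hdiv : HasDerivAt (fun x : ℝ =>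
      (x - lam) * (k + c) / ((1 - x - lam) * (1 - k - c) + (x - lam) * (k + c))) _ q :=
    hN.div hDen hD.ne'
  rw [hdiv.deriv]
  have hpos : 0 < (k + c) * ((1 - q - lam) * (1 - k - c) + (q - lam) * (k + c)) -
      (q - lam) * (k + c) * ((-1) * (1 - k - c) + 1 * (k + c)) := by
    have h : (k + c) * ((1 - q - lam) * (1 - k - c) + (q - lam) * (k + c)) -
        (q - lam) * (k + c) * ((-1) * (1 - k - c) + 1 * (k + c)) =
        (k + c) * (1 - k - c) * (1 - 2 * lam) := by ring
    rw [h]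
    exact mul_pos (mul_pos (by linarith) (by linarith)) (by linarith)
  positivity
end

section
/- (Proposition 3, part 2) In the conservatism parameterization, the minimal type in the managerial pool is strictly decreasing in accounting conservatism: for all real q, λ with 0 ≤ λ < q < 1/2, the partial derivative of θ1(q,λ) = (q−λ)(k+c)/((1−q−λ)(1−k−c)+(q−λ)(k+c)) with respect to λ is strictly negative. -/
/-- Proposition 3, part 2: in the conservatism parameterization, the minimal type in the
managerial pool `θ1(q,λ) = (q−λ)(k+c)/((1−q−λ)(1−k−c)+(q−λ)(k+c))` is strictly decreasing
in accounting conservatism `λ`, for all `0 ≤ λ < q < 1/2`. -/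
theorem stmt_6 (k c : ℝ) (hk : 0 < k) (hc : 0 < c) (hkc : k + c < 1) :
    ∀ q lam : ℝ, 0 ≤ lam → lam < q → q < 1/2 →
      deriv (fun x : ℝ =>
        (q - x) * (k + c) / ((1 - q - x) * (1 - k - c) + (q - x) * (k + c))) lam < 0 := by
  intro q lam h0 hlq hq
  have hDpos : 0 < (1 - q - lam) * (1 - k - c) + (q - lam) * (k + c) := by nlinarith
  have hD : (1 - q - lam) * (1 - k - c) + (q - lam) * (k + c) ≠ 0 := ne_of_gt hDpos
  have h1 : HasDerivAt (fun x : ℝ => (q - x) * (k + c)) (-1 * (k + c)) lam :=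
    ((hasDerivAt_id lam).const_sub q).mul_const (k + c)
  have h2 : HasDerivAt (fun x : ℝ => (1 - q - x) * (1 - k - c) + (q - x) * (k + c))
      (-1 * (1 - k - c) + -1 * (k + c)) lam :=
    (((hasDerivAt_id lam).const_sub (1 - q)).mul_const (1 - k - c)).add
      (((hasDerivAt_id lam).const_sub q).mul_const (k + c))
  have h3 : deriv (fun x : ℝ =>
      (q - x) * (k + c) / ((1 - q - x) * (1 - k - c) + (q - x) * (k + c))) lam = _ :=
    (h1.div h2 hD).deriv
  rw [h3]
  apply div_neg_of_neg_of_pos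
  · have : (0:ℝ) < (k + c) * ((1 - k - c) * (1 - 2*q)) := by
      apply mul_pos (by linarith) (mul_pos (by linarith) (by linarith))
    nlinarith [this]
  · positivity
end

section
/- In the conservatism parameterization, the upper investment cutoff is strictly decreasing in accounting conservatism: for all real q, λ with 0 ≤ λ < q < 1/2, the partial derivative of θ0(q,λ) = (1−q+λ)(k+c)/(q+λ+(1−2q)(k+c)) with respect to λ is strictly negative. -/
/-- In the conservatism parameterization, the upper investment cutoff
`θ0(q,λ) = (1−q+λ)(k+c)/(q+λ+(1−2q)(k+c))` is strictly decreasing in accounting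
conservatism `λ`, for all `0 ≤ λ < q < 1/2`. -/
theorem stmt_7 (k c : ℝ) (hk : 0 < k) (hc : 0 < c) (hkc : k + c < 1) :
    ∀ q lam : ℝ, 0 ≤ lam → lam < q → q < 1/2 →
      deriv (fun x : ℝ =>
        (1 - q + x) * (k + c) / (q + x + (1 - 2*q) * (k + c))) lam < 0 := by
  intro q lam hlam hlq hq
  have hm : 0 < k + c := by linarith
  have hD : 0 < q + lam + (1 - 2*q) * (k + c) := by nlinarith
  have h1 : HasDerivAt (fun x : ℝ => (1 - q + x) * (k + c)) (k + c) lam := by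
    simpa using ((hasDerivAt_id lam).const_add (1 - q)).mul_const (k + c)
  have h2 : HasDerivAt (fun x : ℝ => q + x + (1 - 2*q) * (k + c)) 1 lam := by
    simpa using (((hasDerivAt_id lam).const_add q).add_const ((1 - 2*q) * (k + c)))
  have h : deriv (fun x : ℝ => (1 - q + x) * (k + c) / (q + x + (1 - 2*q) * (k + c))) lam = _ := (h1.div h2 hD.ne').deriv
  rw [h]
  rw [div_neg_iff]
  right
  constructor
  · nlinarith [mul_pos hm (mul_pos (show (0:ℝ) < 1 - 2*q by linarith) (show (0:ℝ) < 1 - (k + c) by linarith))]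
  · positivity
end

section
/- The firm's per-type profits from the conditional and unconditional investment zones match at the upper cutoff and the unconditional-zone profit is strictly positive above it: v_u(θ0(q1,q0)) = v_c(θ0(q1,q0)) > 0, v_u is strictly increasing, and v_u(θ) > 0 for all θ ∈ [θ0(q1,q0), 1). -/
/-- The firm's per-type profits from the conditional and unconditional zones match at the
upper cutoff, and the unconditional-zone profit is strictly positive above it:
`v_u(θ0) = v_c(θ0) > 0`, `v_u` is strictly increasing, and `v_u(θ) > 0` on `[θ0, 1)`. -/
theorem stmt_9 (k c q1 q0 : ℝ)
    (hk : 0 < k) (hc : 0 < c) (hkc : k + c < 1)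
    (hq1 : q1 ∈ Set.Ioo (0 : ℝ) (1/2)) (hq0 : q0 ∈ Set.Ioo (0 : ℝ) (1/2)) :
    let wstar : ℝ := c / (k + c)
    let θ0 : ℝ := (1 - q0) * (k + c) / (q1 + (1 - q1 - q0) * (k + c))
    let vc : ℝ → ℝ := fun θ => θ * (1 - q1) * (1 - wstar - k) - (1 - θ) * q0 * k
    let vu : ℝ → ℝ := fun θ => θ * (1 - wstar) - k
    vu θ0 = vc θ0 ∧ 0 < vu θ0 ∧ StrictMono vu ∧ ∀ θ ∈ Set.Ico θ0 1, 0 < vu θ := by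
  obtain ⟨hq1a, hq1b⟩ := hq1
  obtain ⟨hq0a, hq0b⟩ := hq0
  have hs : 0 < k + c := by linarith
  have hsne : k + c ≠ 0 := ne_of_gt hs
  have hqq : 0 < 1 - q1 - q0 := by linarith
  have hD : 0 < q1 + (1 - q1 - q0) * (k + c) := by positivity
  have hDne : q1 + (1 - q1 - q0) * (k + c) ≠ 0 := ne_of_gt hD
  intro wstar θ0 vc vu
  have hw : 1 - wstar = k / (k + c) := by
    simp only [wstar]; rw [eq_div_iff hsne, sub_mul, div_mul_cancel₀ c hsne]; ring
  have hwpos : 0 < 1 - wstar := by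
    rw [hw]; positivity
  have hθ0 : k + c < θ0 := by
    rw [show θ0 = (1 - q0) * (k + c) / (q1 + (1 - q1 - q0) * (k + c)) from rfl,
      lt_div_iff₀ hD]
    nlinarith [mul_pos (mul_pos hs hqq) (show (0:ℝ) < 1 - (k + c) by linarith)]
  have hvu0 : 0 < vu θ0 := by
    have : vu θ0 = θ0 * (k / (k + c)) - k := by rw [show vu θ0 = θ0 * (1 - wstar) - k from rfl, hw]
    rw [this]
    rw [sub_pos, ← div_lt_iff₀ (by positivity : (0:ℝ) < k / (k + c))]
    have : k / (k / (k + c)) = k + c := by field_simp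
    rw [this]; exact hθ0
  have hmono : StrictMono vu := by
    intro a b hab
    simp only [vu]
    have := mul_lt_mul_of_pos_right hab hwpos
    linarith
  refine ⟨?_, hvu0, hmono, ?_⟩
  · show θ0 * (1 - wstar) - k = θ0 * (1 - q1) * (1 - wstar - k) - (1 - θ0) * q0 * k
    simp only [θ0, wstar]
    field_simp
    ring
  · intro θ hθ
    calc 0 < vu θ0 := hvu0
      _ ≤ vu θ := hmono.monotone hθ.1
end

section
/- The ex ante firm value under a uniform type distribution is strictly positive: V(q1,q0) > 0 for all q1, q0 ∈ (0, 1/2). -/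
/-- The ex ante firm value under a uniform type distribution is strictly positive:
`V(q1,q0) > 0` for all `q1, q0 ∈ (0, 1/2)`. -/
theorem stmt_10 (k c q1 q0 : ℝ)
    (hk : 0 < k) (hc : 0 < c) (hkc : k + c < 1)
    (hq1 : q1 ∈ Set.Ioo (0 : ℝ) (1/2)) (hq0 : q0 ∈ Set.Ioo (0 : ℝ) (1/2)) :
    let wstar : ℝ := c / (k + c)
    let θ1 : ℝ := q0 * (k + c) / ((1 - q1) * (1 - k - c) + q0 * (k + c))
    let θ0 : ℝ := (1 - q0) * (k + c) / (q1 + (1 - q1 - q0) * (k + c))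
    0 < (1 / (1 - θ1)) *
      ((∫ θ in θ1..θ0, (θ * (1 - q1) * (1 - wstar - k) - (1 - θ) * q0 * k)) +
       (∫ θ in θ0..(1:ℝ), (θ * (1 - wstar) - k))) := by
  obtain ⟨hq1a, hq1b⟩ := hq1
  obtain ⟨hq0a, hq0b⟩ := hq0
  intro wstar θ1 θ0
  have hws : wstar = c / (k + c) := rfl
  have hθ1 : θ1 = q0 * (k + c) / ((1 - q1) * (1 - k - c) + q0 * (k + c)) := rfl
  have hθ0 : θ0 = (1 - q0) * (k + c) / (q1 + (1 - q1 - q0) * (k + c)) := rfl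
  have hs : 0 < k + c := by linarith
  have hD1 : 0 < (1 - q1) * (1 - k - c) + q0 * (k + c) := by nlinarith
  have hD0 : 0 < q1 + (1 - q1 - q0) * (k + c) := by nlinarith
  -- θ1 < 1
  have hθ1lt1 : θ1 < 1 := by
    rw [hθ1, div_lt_one hD1]; nlinarith
  -- θ1 < θ0
  have hθ1θ0 : θ1 < θ0 := by
    rw [hθ1, hθ0, div_lt_div_iff₀ hD1 hD0]
    nlinarith [mul_pos (show (0:ℝ) < 1 - k - c by linarith)
      (show (0:ℝ) < 1 - q0 - q1 by linarith)]
  -- θ0 < 1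
  have hθ0lt1 : θ0 < 1 := by
    rw [hθ0, div_lt_one hD0]; nlinarith
  -- k + c < θ0
  have hθ0gt : k + c < θ0 := by
    rw [hθ0, lt_div_iff₀ hD0]
    nlinarith [mul_pos (show (0:ℝ) < 1 - q1 - q0 by linarith)
      (show (0:ℝ) < 1 - (k + c) by linarith)]
  -- first integral nonneg
  have h1 : 0 ≤ ∫ θ in θ1..θ0, (θ * (1 - q1) * (1 - wstar - k) - (1 - θ) * q0 * k) := by
    apply intervalIntegral.integral_nonneg hθ1θ0.le
    intro θ hθ
    have hθl : θ1 ≤ θ := hθ.1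
    have key : q0 * (k + c) ≤ θ * ((1 - q1) * (1 - k - c) + q0 * (k + c)) := by
      rw [hθ1, div_le_iff₀ hD1] at hθl
      linarith
    have expr : θ * (1 - q1) * (1 - wstar - k) - (1 - θ) * q0 * k
        = (k / (k + c)) * (θ * ((1 - q1) * (1 - k - c) + q0 * (k + c)) - q0 * (k + c)) := by
      rw [hws]; field_simp; ring
    rw [expr]
    exact mul_nonneg (by positivity) (by linarith)
  -- second integral positive
  have h2 : 0 < ∫ θ in θ0..(1:ℝ), (θ * (1 - wstar) - k) := by
    apply intervalIntegral.intervalIntegral_pos_of_pos_on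
    · exact (Continuous.intervalIntegrable (by continuity) _ _)
    · intro θ hθ
      have hθl : θ0 < θ := hθ.1
      have expr : θ * (1 - wstar) - k = (k / (k + c)) * (θ - (k + c)) := by
        rw [hws]; field_simp; ring
      rw [expr]
      exact mul_pos (by positivity) (by linarith)
    · exact hθ0lt1
  have hpre : 0 < 1 / (1 - θ1) := by
    have : 0 < 1 - θ1 := by linarith
    positivity
  exact mul_pos hpre (by linarith)
end

section
/- (Equilibrium managerial rent, Proposition 1(iii)) The equilibrium rent function R, defined piecewise by R(θ) = 0 for θ ∈ (0, θ1], R(θ) = θ(1−q1)(w*−c) − (1−θ)q0·c for θ ∈ (θ1, θ0], and R(θ) = θ·w* − c for θ ∈ (θ0, 1), is continuous on (0,1), nondecreasing, strictly increasing on (θ1, 1), and satisfies R(θ) > 0 if and only if θ > θ1. Hence the managerial pool {θ ∈ (0,1) : R(θ) > 0} equals {θ ∈ (0,1) : θ > θ1}. -/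
set_option maxHeartbeats 1600000

/-- Proposition 1(iii): the equilibrium rent function `R`, defined piecewise (zero on
`(0, θ1]`, `θ(1−q1)(w*−c) − (1−θ)q0·c` on `(θ1, θ0]`, and `θ·w* − c` on `(θ0, 1)`), is
continuous on `(0,1)`, nondecreasing on `(0,1)`, strictly increasing on `(θ1, 1)`, and
positive exactly above `θ1`; hence the managerial pool equals `{θ ∈ (0,1) : θ > θ1}`. -/
theorem stmt_13 (k c q1 q0 : ℝ)
    (hk : 0 < k) (hc : 0 < c) (hkc : k + c < 1)
    (hq1 : q1 ∈ Set.Ioo (0 : ℝ) (1/2)) (hq0 : q0 ∈ Set.Ioo (0 : ℝ) (1/2)) :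
    let wstar : ℝ := c / (k + c)
    let θ1 : ℝ := q0 * (k + c) / ((1 - q1) * (1 - k - c) + q0 * (k + c))
    let θ0 : ℝ := (1 - q0) * (k + c) / (q1 + (1 - q1 - q0) * (k + c))
    let R : ℝ → ℝ := fun θ =>
      if θ ≤ θ1 then 0
      else if θ ≤ θ0 then θ * (1 - q1) * (wstar - c) - (1 - θ) * q0 * c
      else θ * wstar - c
    ContinuousOn R (Set.Ioo 0 1) ∧
    MonotoneOn R (Set.Ioo 0 1) ∧
    StrictMonoOn R (Set.Ioo θ1 1) ∧
    (∀ θ ∈ Set.Ioo (0 : ℝ) 1, 0 < R θ ↔ θ1 < θ) ∧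
    {θ ∈ Set.Ioo (0 : ℝ) 1 | 0 < R θ} = {θ ∈ Set.Ioo (0 : ℝ) 1 | θ1 < θ} := by
  intro wstar θ1 θ0 R
  obtain ⟨hq1p, hq1h⟩ := hq1
  obtain ⟨hq0p, hq0h⟩ := hq0
  have hs : 0 < k + c := by linarith
  have hs1 : k + c < 1 := hkc
  have hw : wstar = c / (k + c) := rfl
  have hθ1 : θ1 = q0 * (k + c) / ((1 - q1) * (1 - k - c) + q0 * (k + c)) := rfl
  have hθ0 : θ0 = (1 - q0) * (k + c) / (q1 + (1 - q1 - q0) * (k + c)) := rfl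
  have hRdef : ∀ θ, R θ =
      if θ ≤ θ1 then 0
      else if θ ≤ θ0 then θ * (1 - q1) * (wstar - c) - (1 - θ) * q0 * c
      else θ * wstar - c := fun _ => rfl
  have hws : wstar * (k + c) = c := by rw [hw]; field_simp
  clear_value wstar θ1 θ0 R
  have hwpos : 0 < wstar := by rw [hw]; positivity
  have hwc : 0 < wstar - c := by nlinarith
  set m : ℝ := (1 - q1) * (wstar - c) + q0 * c with hm
  clear_value m
  have hmpos : 0 < m := by rw [hm]; nlinarith
  have hwm : m < wstar := by
    have h1 : 0 < q1 * wstar := by positivity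
    have h2 : 0 < (1 - q1 - q0) * c := by nlinarith
    nlinarith
  have hD1 : 0 < (1 - q1) * (1 - k - c) + q0 * (k + c) := by nlinarith
  have hD0 : 0 < q1 + (1 - q1 - q0) * (k + c) := by nlinarith
  -- key identities
  have key1 : m * θ1 = q0 * c := by
    rw [hm, hθ1, hw]; field_simp; rw [div_eq_iff (by nlinarith)]; ring
  have key0 : wstar * θ0 - c = m * θ0 - q0 * c := by
    rw [hm, hθ0, hw]; field_simp
    have hne : q1 + (k + c) * (1 - q1 - q0) ≠ 0 := by nlinarith
    field_simp; ring
  have hθ0s : k + c < θ0 := by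
    rw [hθ0, lt_div_iff₀ hD0]
    nlinarith [mul_pos (show (0:ℝ) < 1 - q1 - q0 by linarith) (show (0:ℝ) < 1 - (k+c) by linarith)]
  have htop0 : 0 < wstar * θ0 - c := by nlinarith
  have h10 : θ1 < θ0 := by
    have : m * θ1 < m * θ0 := by nlinarith
    exact lt_of_mul_lt_mul_left this (le_of_lt hmpos)
  -- R as a max of linear functions
  have hmax : ∀ θ, R θ = max (max 0 (m * θ - q0 * c)) (wstar * θ - c) := by
    intro θ
    rw [hRdef]
    split_ifs with h1 h2
    · have e1 : m * θ - q0 * c ≤ 0 := by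
        have h := mul_le_mul_of_nonneg_left h1 hmpos.le
        linarith
      have e2 : wstar * θ - c ≤ 0 := by
        have hA : 0 ≤ (wstar - m) * (θ0 - θ) := mul_nonneg (by linarith) (by linarith)
        have hA' : (wstar - m) * (θ0 - θ) = wstar*θ0 - wstar*θ - m*θ0 + m*θ := by ring
        rw [hA'] at hA
        linarith [key0, e1]
      rw [max_eq_left e1, max_eq_left e2]
    · have hmid : θ * (1 - q1) * (wstar - c) - (1 - θ) * q0 * c = m * θ - q0 * c := by
        rw [hm]; ring
      push_neg at h1
      have e1 : 0 ≤ m * θ - q0 * c := by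
        have h := mul_le_mul_of_nonneg_left h1.le hmpos.le
        linarith
      have e2 : wstar * θ - c ≤ m * θ - q0 * c := by
        have hA : 0 ≤ (wstar - m) * (θ0 - θ) := mul_nonneg (by linarith) (by linarith)
        have hA' : (wstar - m) * (θ0 - θ) = wstar*θ0 - wstar*θ - m*θ0 + m*θ := by ring
        rw [hA'] at hA
        linarith [key0]
      rw [hmid, max_eq_right e1, max_eq_left e2]
    · push_neg at h1 h2
      have e1 : 0 ≤ m * θ - q0 * c := by
        have h := mul_le_mul_of_nonneg_left (by linarith : θ1 ≤ θ) hmpos.le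
        linarith
      have e2 : m * θ - q0 * c ≤ wstar * θ - c := by
        have hA : 0 ≤ (wstar - m) * (θ - θ0) := mul_nonneg (by linarith) (by linarith)
        have hA' : (wstar - m) * (θ - θ0) = wstar*θ - wstar*θ0 - m*θ + m*θ0 := by ring
        rw [hA'] at hA
        linarith [key0]
      rw [max_eq_right e1, max_eq_right e2]
      ring
  refine ⟨?_, ?_, ?_, ?_, ?_⟩
  · exact ContinuousOn.congr
      ((Continuous.max (Continuous.max continuous_const (by continuity))
        (by continuity)).continuousOn) (fun θ _ => hmax θ)
  · intro x _ y _ hxy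
    rw [hmax x, hmax y]
    have ha := mul_le_mul_of_nonneg_left hxy hmpos.le
    have hb := mul_le_mul_of_nonneg_left hxy hwpos.le
    exact max_le_max (max_le_max le_rfl (by linarith)) (by linarith)
  · intro x hx y hy hxy
    rw [hmax x, hmax y]
    have hx1 : θ1 < x := hx.1
    have hy1 : θ1 < y := hy.1
    have hax := mul_le_mul_of_nonneg_left hx1.le hmpos.le
    have hay := mul_le_mul_of_nonneg_left hy1.le hmpos.le
    have hm2 := mul_lt_mul_of_pos_left hxy hmpos
    have hw2 := mul_lt_mul_of_pos_left hxy hwpos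
    rw [max_eq_right (by linarith : (0:ℝ) ≤ m * x - q0 * c),
        max_eq_right (by linarith : (0:ℝ) ≤ m * y - q0 * c)]
    exact max_lt_max (by linarith) (by linarith)
  · intro θ _
    constructor
    · intro hpos
      by_contra h
      push_neg at h
      rw [hRdef, if_pos h] at hpos
      linarith
    · intro h
      rw [hmax]
      have hm2 := mul_lt_mul_of_pos_left h hmpos
      have : 0 < m * θ - q0 * c := by linarith
      calc (0:ℝ) < m * θ - q0 * c := this
        _ ≤ max 0 (m * θ - q0 * c) := le_max_right _ _
        _ ≤ _ := le_max_left _ _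
  · ext θ
    simp only [Set.mem_setOf_eq]
    constructor
    · rintro ⟨ha, hb⟩
      refine ⟨ha, ?_⟩
      by_contra h
      push_neg at h
      rw [hRdef, if_pos h] at hb
      linarith
    · rintro ⟨ha, hb⟩
      refine ⟨ha, ?_⟩
      rw [hmax]
      have hm2 := mul_lt_mul_of_pos_left hb hmpos
      have : 0 < m * θ - q0 * c := by linarith
      calc (0:ℝ) < m * θ - q0 * c := this
        _ ≤ max 0 (m * θ - q0 * c) := le_max_right _ _
        _ ≤ _ := le_max_left _ _
end

section
/- (Key step of Proposition 6) For all q1, q0 ∈ (0, 1/2): 1/θ0(q1,q0) − 1 = (1−k−c)·q1/((k+c)(1−q0)), (1−θ1(q1,q0))·q0/(θ1(q1,q0)·(1−q1)) = (1−k−c)/(k+c), and (1−k−c)·q1/((k+c)(1−q0)) < (1−k−c)/(k+c). Consequently, max{c/θ0(q1,q0), (1 + (1−θ1(q1,q0))·q0/(θ1(q1,q0)·(1−q1)))·c} = c/(k+c), so if b ≥ 0 and the wage w = (c−b)/(k+c) satisfies w ≥ (1 + (1−θ1)·q0/(θ1·(1−q1)))·c, then b = 0. -/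
/-- Key step of Proposition 6 (moral-hazard extension): identities and inequality for the
investment cutoffs, the resulting maximum `max{c/θ0, (1 + (1−θ1)q0/(θ1(1−q1)))·c} = c/(k+c)`,
and the consequence that a payment `b ≥ 0` upon investment with wage `w = (c−b)/(k+c)`
satisfying the effort incentive constraint must be `b = 0`. -/
theorem stmt_17 (k c q1 q0 : ℝ)
    (hk : 0 < k) (hc : 0 < c) (hkc : k + c < 1)
    (hq1 : q1 ∈ Set.Ioo (0 : ℝ) (1/2)) (hq0 : q0 ∈ Set.Ioo (0 : ℝ) (1/2)) :
    let θ1 : ℝ := q0 * (k + c) / ((1 - q1) * (1 - k - c) + q0 * (k + c))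
    let θ0 : ℝ := (1 - q0) * (k + c) / (q1 + (1 - q1 - q0) * (k + c))
    1 / θ0 - 1 = (1 - k - c) * q1 / ((k + c) * (1 - q0)) ∧
    (1 - θ1) * q0 / (θ1 * (1 - q1)) = (1 - k - c) / (k + c) ∧
    (1 - k - c) * q1 / ((k + c) * (1 - q0)) < (1 - k - c) / (k + c) ∧
    max (c / θ0) ((1 + (1 - θ1) * q0 / (θ1 * (1 - q1))) * c) = c / (k + c) ∧
    (∀ b : ℝ, 0 ≤ b →
      (1 + (1 - θ1) * q0 / (θ1 * (1 - q1))) * c ≤ (c - b) / (k + c) → b = 0) := by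
  obtain ⟨hq10, hq11⟩ := hq1
  obtain ⟨hq00, hq01⟩ := hq0
  have hkc0 : 0 < k + c := by linarith
  have h1kc : 0 < 1 - k - c := by linarith
  have hq0' : 0 < 1 - q0 := by linarith
  have hq1' : 0 < 1 - q1 := by linarith
  have hD1 : 0 < (1 - q1) * (1 - k - c) + q0 * (k + c) := by positivity
  have hD0 : 0 < q1 + (1 - q1 - q0) * (k + c) := by nlinarith
  intro θ1 θ0
  have hθ1 : 0 < θ1 := by positivity
  have hθ0 : 0 < θ0 := by positivity
  have h1 : 1 / θ0 - 1 = (1 - k - c) * q1 / ((k + c) * (1 - q0)) := by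
    show 1 / ((1 - q0) * (k + c) / (q1 + (1 - q1 - q0) * (k + c))) - 1 = _
    field_simp
    ring
  have h2 : (1 - θ1) * q0 / (θ1 * (1 - q1)) = (1 - k - c) / (k + c) := by
    show (1 - q0 * (k + c) / ((1 - q1) * (1 - k - c) + q0 * (k + c))) * q0 /
        (q0 * (k + c) / ((1 - q1) * (1 - k - c) + q0 * (k + c)) * (1 - q1)) = _
    rw [div_eq_div_iff (by positivity) hkc0.ne']
    field_simp
    ring
  have h3 : (1 - k - c) * q1 / ((k + c) * (1 - q0)) < (1 - k - c) / (k + c) := by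
    rw [div_lt_div_iff₀ (by positivity) hkc0]
    nlinarith [mul_lt_mul_of_pos_left (show q1 < 1 - q0 by linarith) (mul_pos h1kc hkc0)]
  have h4 : (1 + (1 - θ1) * q0 / (θ1 * (1 - q1))) * c = c / (k + c) := by
    rw [h2]; field_simp; ring
  refine ⟨h1, h2, h3, ?_, ?_⟩
  · have hC : c / θ0 ≤ c / (k + c) := by
      have hA : c / θ0 = (1 + (1 - k - c) * q1 / ((k + c) * (1 - q0))) * c := by
        rw [← h1]; field_simp; ring
      have hB : c / (k + c) = (1 + (1 - k - c) / (k + c)) * c := by field_simp; ring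
      rw [hA, hB]
      nlinarith [h3]
    rw [h4]
    exact max_eq_right hC
  · intro b hb hle
    rw [h4] at hle
    rw [div_le_div_iff₀ hkc0 hkc0] at hle
    nlinarith
end

section
/- (Commitment benchmark dominates screening) For all q1, q0 ∈ (0, 1/2), the with-commitment screening cutoff θ_commit = c/w* = k + c strictly exceeds the no-commitment cutoff: θ1(q1,q0) < k + c. -/
/-- Commitment benchmark dominates screening: for all `q1, q0 ∈ (0, 1/2)`, the
with-commitment screening cutoff `θ_commit = c/w* = k + c` strictly exceeds the
no-commitment cutoff `θ1(q1,q0)`. -/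
theorem stmt_18 (k c : ℝ) (hk : 0 < k) (hc : 0 < c) (hkc : k + c < 1) :
    c / (c / (k + c)) = k + c ∧
    ∀ q1 ∈ Set.Ioo (0 : ℝ) (1/2), ∀ q0 ∈ Set.Ioo (0 : ℝ) (1/2),
      q0 * (k + c) / ((1 - q1) * (1 - k - c) + q0 * (k + c)) < k + c := by
  constructor
  · field_simp
  · rintro q1 ⟨hq1, hq1'⟩ q0 ⟨hq0, hq0'⟩
    have hD : 0 < (1 - q1) * (1 - k - c) + q0 * (k + c) := by nlinarith
    rw [div_lt_iff₀ hD]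
    nlinarith [mul_pos (mul_pos (by linarith : (0:ℝ) < k + c) (by linarith : (0:ℝ) < 1 - q1 - q0)) (by linarith : (0:ℝ) < 1 - k - c)]
end
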